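/- Let p ≥ 1 be an integer, M_p > 0, c > 0, let q be a real with 2 ≤ q ≤ p+1 and σ_q > 0. Let f : ℝ^n → ℝ be differentiable and uniformly convex of degree q with parameter σ_q, with global minimizer x*. Let z_0 ∈ ℝ^n and Δ_0 > 0 satisfy f(z_0) − f(x*) ≤ Δ_0, and for k ≥ 0 set Δ_k = Δ_0 · 2^{−k} and N_k = max{⌈(2 c M_p q^{(p+1)/q} σ_q^{−(p+1)/q} Δ_k^{(p+1−q)/q})^{2/(3p+1)}⌉, 1}. Suppose the sequence (z_k) satisfies, for every k ≥ 0, f(z_{k+1}) − f(x*) ≤ c M_p ∥z_k − x*∥^{p+1} / N_k^{(3p+1)/2}. Then for every k ≥ 0, (σ_q/q) ∥z_k − x*∥^q ≤ f(z_k) − f(x*) ≤ Δ_0 · 2^{−k}. -/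

import Mathlib

open scoped RealInnerProductSpace

/-- `f` is uniformly convex of degree `q` with parameter `σ`:
`f(y) ≥ f(x) + ⟨∇f(x), y - x⟩ + (σ/q)‖y - x‖^q` for all `x, y`. -/
def UniformlyConvexDeg {n : ℕ} (q σ : ℝ) (f : EuclideanSpace ℝ (Fin n) → ℝ) : Prop :=
  ∀ x y : EuclideanSpace ℝ (Fin n),
    f y ≥ f x + ⟪gradient f x, y - x⟫ + (σ / q) * ‖y - x‖ ^ q

/-- Theorem 3 (convergence of the Restarted Optimal Tensor Method, Algorithm 3):
with `Δ_k = Δ_0 2^{-k}` and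
`N_k = max{⌈(2 c M_p q^{(p+1)/q} σ_q^{-(p+1)/q} Δ_k^{(p+1-q)/q})^{2/(3p+1)}⌉, 1}`, if every
restart satisfies the Theorem 1 guarantee
`f(z_{k+1}) - f(x_*) ≤ c M_p ‖z_k - x_*‖^{p+1}/N_k^{(3p+1)/2}`, then for every `k`,
`(σ_q/q)‖z_k - x_*‖^q ≤ f(z_k) - f(x_*) ≤ Δ_0 2^{-k}`. -/
theorem restarted_tensor_method_convergence {n : ℕ} (p : ℕ) (hp : 1 ≤ p) (Mp c : ℝ)
    (hMp : 0 < Mp) (hc : 0 < c)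
    (q σq : ℝ) (hq2 : 2 ≤ q) (hqp : q ≤ (p : ℝ) + 1) (hσ : 0 < σq)
    (f : EuclideanSpace ℝ (Fin n) → ℝ) (hdiff : Differentiable ℝ f)
    (hucon : UniformlyConvexDeg q σq f)
    (xstar : EuclideanSpace ℝ (Fin n)) (hmin : ∀ w, f xstar ≤ f w)
    (z : ℕ → EuclideanSpace ℝ (Fin n)) (Δ0 : ℝ) (hΔ0 : 0 < Δ0)
    (hz0 : f (z 0) - f xstar ≤ Δ0)
    (N : ℕ → ℕ)
    (hN : ∀ k : ℕ, N k = max (⌈(2 * c * Mp * q ^ (((p : ℝ) + 1) / q)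
        * σq ^ (-(((p : ℝ) + 1) / q))
        * (Δ0 * 2 ^ (-(k : ℤ))) ^ (((p : ℝ) + 1 - q) / q)) ^ (2 / (3 * (p : ℝ) + 1))⌉₊) 1)
    (hzk : ∀ k : ℕ, f (z (k + 1)) - f xstar
        ≤ c * Mp * ‖z k - xstar‖ ^ (p + 1) / (N k : ℝ) ^ ((3 * (p : ℝ) + 1) / 2)) :
    ∀ k : ℕ, (σq / q) * ‖z k - xstar‖ ^ q ≤ f (z k) - f xstar ∧
      f (z k) - f xstar ≤ Δ0 * 2 ^ (-(k : ℤ)) := by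
  have hq0 : (0:ℝ) < q := by linarith
  -- gradient at the minimizer is zero
  have hgrad : gradient f xstar = 0 := by
    have hloc : IsLocalMin f xstar := Filter.Eventually.of_forall hmin
    have hfd : fderiv ℝ f xstar = 0 := hloc.fderiv_eq_zero
    simp [gradient, hfd]
  have lower : ∀ k, (σq / q) * ‖z k - xstar‖ ^ q ≤ f (z k) - f xstar := by
    intro k
    have h := hucon xstar (z k)
    rw [hgrad, inner_zero_left] at h
    linarith
  have upper : ∀ k, f (z k) - f xstar ≤ Δ0 * 2 ^ (-(k : ℤ)) := by
    intro k
    induction k with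
    | zero => simpa using hz0
    | succ k ih =>
      set D := Δ0 * 2 ^ (-(k : ℤ)) with hD
      have hDpos : 0 < D := by positivity
      have hr : ‖z k - xstar‖ ^ q ≤ q / σq * D := by
        have h1 := lower k
        have h2 : (σq / q) * ‖z k - xstar‖ ^ q ≤ D := h1.trans ih
        rw [div_mul_eq_mul_div, div_le_iff₀ hq0] at h2
        rw [div_mul_eq_mul_div, le_div_iff₀ hσ]
        calc ‖z k - xstar‖ ^ q * σq = σq * ‖z k - xstar‖ ^ q := by ring
        _ ≤ D * q := h2
        _ = q * D := by ring
      set r := ‖z k - xstar‖ with hrdef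
      have hr0 : (0:ℝ) ≤ r := norm_nonneg _
      have hexp : q * (((p:ℝ)+1)/q) = (p:ℝ)+1 := by field_simp
      have hpow : (r : ℝ) ^ (p + 1) = (r ^ q) ^ (((p:ℝ)+1)/q) := by
        rw [← Real.rpow_mul hr0, hexp, ← Real.rpow_natCast r (p+1)]
        push_cast
        ring_nf
      have hrq : (r : ℝ) ^ (p + 1) ≤ (q / σq * D) ^ (((p:ℝ)+1)/q) := by
        rw [hpow]
        exact Real.rpow_le_rpow (by positivity) hr (by positivity)
      set A := 2 * c * Mp * q ^ (((p : ℝ) + 1) / q) * σq ^ (-(((p : ℝ) + 1) / q))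
          * D ^ (((p : ℝ) + 1 - q) / q) with hA
      have hA0 : 0 < A := by positivity
      -- c * Mp * (q/σq * D)^((p+1)/q) = A/2 * D
      have hAD : c * Mp * (q / σq * D) ^ (((p:ℝ)+1)/q) = A / 2 * D := by
        have e1 : (q / σq * D) ^ (((p:ℝ)+1)/q)
            = q ^ (((p:ℝ)+1)/q) * σq ^ (-(((p:ℝ)+1)/q)) * D ^ (((p:ℝ)+1)/q) := by
          rw [Real.mul_rpow (by positivity) hDpos.le,
            Real.div_rpow hq0.le hσ.le, Real.rpow_neg hσ.le, div_eq_mul_inv]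
        have e2 : D ^ (((p:ℝ)+1)/q) = D ^ (((p:ℝ)+1-q)/q) * D := by
          have : ((p:ℝ)+1)/q = ((p:ℝ)+1-q)/q + 1 := by field_simp; ring
          rw [this, Real.rpow_add hDpos, Real.rpow_one]
        rw [e1, e2, hA]; ring
      -- N k is large enough
      have hNA : A ≤ (N k : ℝ) ^ ((3 * (p : ℝ) + 1) / 2) := by
        have h3p : (0:ℝ) < 3 * (p:ℝ) + 1 := by positivity
        have h1 : A ^ (2 / (3 * (p:ℝ) + 1)) ≤ (N k : ℝ) := by
          have hle : (⌈A ^ (2 / (3 * (p:ℝ) + 1))⌉₊ : ℕ) ≤ N k := by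
            rw [hN k, hA, hD]
            exact le_max_left _ _
          exact le_trans (Nat.le_ceil _) (Nat.cast_le.mpr hle)
        calc A = (A ^ (2 / (3 * (p:ℝ) + 1))) ^ ((3 * (p:ℝ) + 1) / 2) := by
              rw [← Real.rpow_mul hA0.le]
              rw [div_mul_div_comm]
              rw [show 2 * (3 * (p:ℝ) + 1) / ((3 * (p:ℝ) + 1) * 2) = 1 by
                field_simp]
              exact (Real.rpow_one A).symm
        _ ≤ (N k : ℝ) ^ ((3 * (p:ℝ) + 1) / 2) :=
              Real.rpow_le_rpow (by positivity) h1 (by positivity)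
      have hnum : c * Mp * r ^ (p + 1) ≤ A / 2 * D := by
        calc c * Mp * r ^ (p + 1) ≤ c * Mp * (q / σq * D) ^ (((p:ℝ)+1)/q) := by
              have := mul_le_mul_of_nonneg_left hrq (by positivity : (0:ℝ) ≤ c * Mp)
              linarith
        _ = A / 2 * D := hAD
      have hstep : f (z (k + 1)) - f xstar ≤ D / 2 := by
        calc f (z (k + 1)) - f xstar
            ≤ c * Mp * r ^ (p + 1) / (N k : ℝ) ^ ((3 * (p : ℝ) + 1) / 2) := hzk k
        _ ≤ (A / 2 * D) / A := by
              apply div_le_div₀ (by positivity) hnum hA0 hNA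
        _ = D / 2 := by field_simp
      have h2k : Δ0 * 2 ^ (-((k:ℕ)+1 : ℤ)) = D / 2 := by
        rw [hD, neg_add, zpow_add₀ (by norm_num : (2:ℝ) ≠ 0)]
        norm_num
        ring
      calc f (z (k + 1)) - f xstar ≤ D / 2 := hstep
      _ = Δ0 * 2 ^ (-((k+1 : ℕ) : ℤ)) := by push_cast; rw [h2k]
  exact fun k => ⟨lower k, upper k⟩
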